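/- Let 𝒮 be a finite set of states and s_1, …, s_T (T ≥ 1) a finite sequence in 𝒮 that visits every state at least once. For s ∈ 𝒮 let v(s) = #{t ∈ {1, …, T} : s_t = s}, and define the 'cyclic empirical' transition matrix p̃(s′|s) = ( #{t ∈ {1, …, T−1} : s_t = s and s_{t+1} = s′} + 1{s_T = s and s_1 = s′} ) / v(s). Then p̃ is a row-stochastic matrix, it is irreducible, and the empirical frequency vector μ(s) = v(s)/T is its stationary distribution, i.e., Σ_s μ(s) p̃(s′|s) = μ(s′) for every s′. -/

import Mathlib

/-- The cyclic empirical transition matrix of a trajectory `seq 0, seq 1, …, seq (T-1)`: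
`p̃(b|a) = (#{t < T-1 : seq t = a, seq (t+1) = b} + 1{seq (T-1) = a, seq 0 = b}) / v(a)`,
where `v(a)` is the number of visits to `a`. -/
noncomputable def cyclicEmpirical {𝒮 : Type*} [Fintype 𝒮] [DecidableEq 𝒮]
    (T : ℕ) (seq : ℕ → 𝒮) : Matrix 𝒮 𝒮 ℝ :=
  Matrix.of fun a b =>
    ((((Finset.range (T - 1)).filter fun t => seq t = a ∧ seq (t + 1) = b).card : ℝ) +
        (if seq (T - 1) = a ∧ seq 0 = b then 1 else 0)) /
      (((Finset.range T).filter fun t => seq t = a).card : ℝ)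

/-- The cyclic empirical transition matrix of a trajectory visiting every state is a
row-stochastic irreducible matrix whose stationary distribution is the empirical
frequency vector `μ(s) = v(s)/T`. -/
theorem cyclicEmpirical_stationary
    {𝒮 : Type*} [Fintype 𝒮] [DecidableEq 𝒮] [Nonempty 𝒮]
    (T : ℕ) (hT : 1 ≤ T)
    (seq : ℕ → 𝒮)
    (hvisit : ∀ s : 𝒮, ∃ t < T, seq t = s) :
    (∀ a b, 0 ≤ cyclicEmpirical T seq a b) ∧
      (∀ a, ∑ b, cyclicEmpirical T seq a b = 1) ∧
      (∀ a b, ∃ n : ℕ, 1 ≤ n ∧ 0 < (cyclicEmpirical T seq ^ n) a b) ∧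
      (∀ b : 𝒮,
        ∑ a, (((Finset.range T).filter fun t => seq t = a).card : ℝ) / T *
            cyclicEmpirical T seq a b =
          (((Finset.range T).filter fun t => seq t = b).card : ℝ) / T) := by
  classical
  have hT0 : 0 < T := hT
  have hT' : T - 1 + 1 = T := Nat.succ_pred_eq_of_pos hT0
  have hvpos : ∀ a : 𝒮, 0 < ((Finset.range T).filter fun t => seq t = a).card := by
    intro a
    obtain ⟨t, ht, hts⟩ := hvisit a
    exact Finset.card_pos.mpr ⟨t, Finset.mem_filter.mpr ⟨Finset.mem_range.mpr ht, hts⟩⟩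
  have hvR : ∀ a : 𝒮, (0:ℝ) < ((Finset.range T).filter fun t => seq t = a).card := by
    intro a; exact_mod_cast hvpos a
  set N : 𝒮 → 𝒮 → ℕ := fun a b =>
    (((Finset.range (T - 1)).filter fun t => seq t = a ∧ seq (t + 1) = b).card) +
      (if seq (T - 1) = a ∧ seq 0 = b then 1 else 0) with hN
  have hentry : ∀ a b, cyclicEmpirical T seq a b
      = (N a b : ℝ) / ((Finset.range T).filter fun t => seq t = a).card := by
    intro a b
    simp only [cyclicEmpirical, Matrix.of_apply, hN]
    congr 1
    push_cast
    ring
  have hrowN : ∀ a, ∑ b, N a b = ((Finset.range T).filter fun t => seq t = a).card := by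
    intro a
    have h1 : ∑ b, N a b =
        (∑ t ∈ Finset.range (T-1), if seq t = a then 1 else 0) +
          (if seq (T-1) = a then 1 else 0) := by
      simp only [hN]
      rw [Finset.sum_add_distrib]
      congr 1
      · simp only [Finset.card_filter]
        rw [Finset.sum_comm]
        refine Finset.sum_congr rfl fun t _ => ?_
        by_cases h : seq t = a <;> simp [h]
      · by_cases h : seq (T-1) = a <;> simp [h]
    rw [h1]
    conv_rhs => rw [Finset.card_filter, ← hT', Finset.sum_range_succ]
  have hcolN : ∀ b, ∑ a, N a b = ((Finset.range T).filter fun t => seq t = b).card := by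
    intro b
    have h1 : ∑ a, N a b =
        (∑ t ∈ Finset.range (T-1), if seq (t+1) = b then 1 else 0) +
          (if seq 0 = b then 1 else 0) := by
      simp only [hN]
      rw [Finset.sum_add_distrib]
      congr 1
      · simp only [Finset.card_filter]
        rw [Finset.sum_comm]
        refine Finset.sum_congr rfl fun t _ => ?_
        by_cases h : seq (t+1) = b <;> simp [h]
      · by_cases h : seq 0 = b <;> simp [h]
    rw [h1]
    conv_rhs => rw [Finset.card_filter, ← hT', Finset.sum_range_succ']
  have hnn : ∀ a b, 0 ≤ cyclicEmpirical T seq a b := by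
    intro a b
    rw [hentry]
    positivity
  have hsum : ∀ a, ∑ b, cyclicEmpirical T seq a b = 1 := by
    intro a
    simp only [hentry]
    rw [← Finset.sum_div, div_eq_one_iff_eq (ne_of_gt (hvR a))]
    exact_mod_cast hrowN a
  have hstep : ∀ t : ℕ, 0 < cyclicEmpirical T seq (seq (t % T)) (seq ((t+1) % T)) := by
    intro t
    have hmod : (t + 1) % T = (t % T + 1) % T := by
      conv_lhs => rw [← Nat.mod_add_div t T, add_right_comm]
      rw [Nat.add_mul_mod_self_left]
    have hr : t % T < T := Nat.mod_lt t hT0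
    rw [hentry]
    apply div_pos _ (hvR _)
    have hNpos : 0 < N (seq (t % T)) (seq ((t+1) % T)) := by
      by_cases h : t % T + 1 = T
      · have h1 : (t+1) % T = 0 := by rw [hmod, h, Nat.mod_self]
        have h2 : T - 1 = t % T := by omega
        have hcond : seq (T-1) = seq (t % T) ∧ seq 0 = seq ((t+1) % T) := by
          rw [h1, h2]; exact ⟨rfl, rfl⟩
        simp only [hN, if_pos hcond]
        omega
      · have hlt : t % T + 1 < T := by omega
        have h1 : (t+1) % T = t % T + 1 := by rw [hmod, Nat.mod_eq_of_lt hlt]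
        have hmem : t % T ∈ (Finset.range (T-1)).filter
            fun u => seq u = seq (t % T) ∧ seq (u+1) = seq ((t+1) % T) :=
          Finset.mem_filter.mpr ⟨Finset.mem_range.mpr (by omega), rfl, by rw [h1]⟩
        have hc := Finset.card_pos.mpr ⟨_, hmem⟩
        simp only [hN]
        omega
    exact_mod_cast hNpos
  have hpownn : ∀ n : ℕ, ∀ a b, 0 ≤ (cyclicEmpirical T seq ^ n) a b := by
    intro n
    induction n with
    | zero =>
      intro a b
      rw [pow_zero]
      by_cases h : a = b <;> simp [Matrix.one_apply, h]
    | succ n ih =>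
      intro a b
      rw [pow_succ, Matrix.mul_apply]
      exact Finset.sum_nonneg fun x _ => mul_nonneg (ih a x) (hnn x b)
  have hpath : ∀ n t : ℕ,
      0 < (cyclicEmpirical T seq ^ (n+1)) (seq (t % T)) (seq ((t + n + 1) % T)) := by
    intro n
    induction n with
    | zero => intro t; rw [pow_one]; exact hstep t
    | succ n ih =>
      intro t
      rw [pow_succ, Matrix.mul_apply]
      have hterm : 0 < (cyclicEmpirical T seq ^ (n+1)) (seq (t % T)) (seq ((t+n+1) % T)) *
          cyclicEmpirical T seq (seq ((t+n+1) % T)) (seq ((t+n+1+1) % T)) :=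
        mul_pos (ih t) (hstep (t+n+1))
      exact Finset.sum_pos' (fun x _ => mul_nonneg (hpownn _ _ _) (hnn _ _))
        ⟨seq ((t+n+1) % T), Finset.mem_univ _, hterm⟩
  have hirr : ∀ a b, ∃ n : ℕ, 1 ≤ n ∧ 0 < (cyclicEmpirical T seq ^ n) a b := by
    intro a b
    obtain ⟨ta, hta, has⟩ := hvisit a
    obtain ⟨tb, htb, hbs⟩ := hvisit b
    refine ⟨tb + T - ta, by omega, ?_⟩
    have h2 : ta + (tb + T - ta - 1) + 1 = tb + T := by omega
    have hp := hpath (tb + T - ta - 1) ta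
    rw [h2, Nat.mod_eq_of_lt hta, Nat.add_mod_right, Nat.mod_eq_of_lt htb, has, hbs] at hp
    have h1 : tb + T - ta = (tb + T - ta - 1) + 1 := by omega
    rw [h1]
    exact hp
  have hstat : ∀ b : 𝒮,
      ∑ a, (((Finset.range T).filter fun t => seq t = a).card : ℝ) / T *
          cyclicEmpirical T seq a b =
        (((Finset.range T).filter fun t => seq t = b).card : ℝ) / T := by
    intro b
    have hTR : (T:ℝ) ≠ 0 := by exact_mod_cast hT0.ne'
    have h1 : ∀ a, (((Finset.range T).filter fun t => seq t = a).card : ℝ) / T *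
        cyclicEmpirical T seq a b = (N a b : ℝ) / T := by
      intro a
      rw [hentry]
      have hva := (hvR a).ne'
      field_simp
    rw [Finset.sum_congr rfl fun a _ => h1 a, ← Finset.sum_div]
    congr 1
    exact_mod_cast hcolN b
  exact ⟨hnn, hsum, hirr, hstat⟩
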